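/- With notation as above (frame {ψ_j} for S with bounds c₁, c₂, closed subspace T with cos(θ_{T,S}) > 0, consistent reconstruction F : H₀ = T ⊕ S⊥ → T defined by ⟨F(f), ψ_j⟩ = ⟨f, ψ_j⟩ for all j), the condition number κ(F) = sup_{f∈H₀, f̂≠0} ‖F(f)‖/‖f̂‖_{ℓ²} satisfies sec(θ_{T,S})/√c₂ ≤ κ(F) ≤ sec(θ_{T,S})/√c₁, where f̂ = (⟨f,ψ_j⟩)_j ∈ ℓ². -/

import Mathlib

open Submodule

variable {H : Type*}

/-- The cosine of the subspace angle `θ_{U,W}` between subspaces `U` and `W`: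
`cos θ_{U,W} = inf_{u ∈ U, ‖u‖ = 1} ‖Q_W u‖`. -/
noncomputable def cosAngle [NormedAddCommGroup H] [InnerProductSpace ℂ H]
    (U W : Submodule ℂ H) [HasOrthogonalProjection W] : ℝ :=
  sInf {r : ℝ | ∃ u ∈ U, ‖u‖ = 1 ∧ r = ‖(orthogonalProjection W u : H)‖}

open scoped InnerProductSpace

section Aux

variable [NormedAddCommGroup H] [InnerProductSpace ℂ H] [CompleteSpace H]

/-- For `v ∈ S`, inner products only see the orthogonal projection onto `S`. -/
lemma inner_eq_inner_proj (S : Submodule ℂ H) [HasOrthogonalProjection S]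
    {v : H} (hv : v ∈ S) (g : H) :
    ⟪v, g⟫_ℂ = ⟪v, (orthogonalProjection S g : H)⟫_ℂ := by
  have h : g - (orthogonalProjection S g : H) ∈ Sᗮ :=
    sub_starProjection_mem_orthogonal (K := S) g
  have h0 : ⟪v, g - (orthogonalProjection S g : H)⟫_ℂ = 0 :=
    (Submodule.mem_orthogonal S _).mp h v hv
  rw [inner_sub_right, sub_eq_zero] at h0
  exact h0

lemma norm_proj_le (S : Submodule ℂ H) [HasOrthogonalProjection S] (g : H) :
    ‖(orthogonalProjection S g : H)‖ ≤ ‖g‖ := by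
  calc ‖(orthogonalProjection S g : H)‖ = ‖orthogonalProjection S g‖ := rfl
    _ ≤ ‖orthogonalProjection S‖ * ‖g‖ := (orthogonalProjection S).le_opNorm g
    _ ≤ 1 * ‖g‖ := by
        exact mul_le_mul_of_nonneg_right (orthogonalProjection_norm_le S) (norm_nonneg g)
    _ = ‖g‖ := one_mul _

lemma cosAngle_mul_norm_le (T S : Submodule ℂ H) [HasOrthogonalProjection S]
    {g : H} (hg : g ∈ T) :
    cosAngle T S * ‖g‖ ≤ ‖(orthogonalProjection S g : H)‖ := by
  rcases eq_or_ne g 0 with rfl | hg0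
  · simp
  · have ha : (0 : ℝ) < ‖g‖ := norm_pos_iff.mpr hg0
    set u : H := ((‖g‖⁻¹ : ℝ) : ℂ) • g with hu_def
    have huT : u ∈ T := T.smul_mem _ hg
    have hnorm : ‖u‖ = 1 := by
      rw [hu_def, norm_smul]
      simp [abs_of_nonneg (inv_nonneg.mpr ha.le), inv_mul_cancel₀ ha.ne']
    have hbdd : BddBelow {r : ℝ | ∃ u ∈ T, ‖u‖ = 1 ∧
        r = ‖(orthogonalProjection S u : H)‖} := by
      refine ⟨0, ?_⟩
      rintro r ⟨w, -, -, rfl⟩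
      positivity
    have hle : cosAngle T S ≤ ‖(orthogonalProjection S u : H)‖ :=
      csInf_le hbdd ⟨u, huT, hnorm, rfl⟩
    have hproj : (orthogonalProjection S u : H)
        = ((‖g‖⁻¹ : ℝ) : ℂ) • (orthogonalProjection S g : H) := by
      rw [hu_def, map_smul]
      rfl
    have hnp : ‖(orthogonalProjection S u : H)‖
        = ‖g‖⁻¹ * ‖(orthogonalProjection S g : H)‖ := by
      rw [hproj, norm_smul]
      simp [abs_of_nonneg (inv_nonneg.mpr ha.le)]
    rw [hnp] at hle
    have := mul_le_mul_of_nonneg_right hle ha.le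
    calc cosAngle T S * ‖g‖ ≤ ‖g‖⁻¹ * ‖(orthogonalProjection S g : H)‖ * ‖g‖ := this
      _ = ‖(orthogonalProjection S g : H)‖ * (‖g‖⁻¹ * ‖g‖) := by ring
      _ = ‖(orthogonalProjection S g : H)‖ := by
          rw [inv_mul_cancel₀ ha.ne', mul_one]

end Aux

/-- the condition number `κ(F) = sup_{f ∈ H₀, f̂ ≠ 0} ‖F(f)‖/‖f̂‖_{ℓ²}` of the
consistent reconstruction `F : H₀ = T ⊕ Sᗮ → T` (defined by `⟨F(f),ψ_j⟩ = ⟨f,ψ_j⟩` for all `j`)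
satisfies `sec θ_{T,S}/√c₂ ≤ κ(F) ≤ sec θ_{T,S}/√c₁`. -/
theorem stmt6 [NormedAddCommGroup H] [InnerProductSpace ℂ H] [CompleteSpace H]
    [TopologicalSpace.SeparableSpace H]
    (S T : Submodule ℂ H) (hS : IsClosed (S : Set H)) (hT : IsClosed (T : Set H))
    [HasOrthogonalProjection S]
    (ψ : ℕ → H) (hmem : ∀ j, ψ j ∈ S)
    (c₁ c₂ : ℝ) (hc₁ : 0 < c₁) (hc₁₂ : c₁ ≤ c₂)
    (hframe : ∀ f ∈ S, c₁ * ‖f‖ ^ 2 ≤ ∑' j, ‖⟪ψ j, f⟫_ℂ‖ ^ 2 ∧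
      ∑' j, ‖⟪ψ j, f⟫_ℂ‖ ^ 2 ≤ c₂ * ‖f‖ ^ 2)
    (hangle : 0 < cosAngle T S)
    (F : H → H)
    (hF : ∀ f ∈ T ⊔ Sᗮ, F f ∈ T ∧ ∀ j, ⟪ψ j, F f⟫_ℂ = ⟪ψ j, f⟫_ℂ)
    (κ : ℝ)
    (hκ : IsLUB {r : ℝ | ∃ f ∈ T ⊔ Sᗮ, (∑' j, ‖⟪ψ j, f⟫_ℂ‖ ^ 2) ≠ 0 ∧
      r = ‖F f‖ / Real.sqrt (∑' j, ‖⟪ψ j, f⟫_ℂ‖ ^ 2)} κ) :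
    (cosAngle T S)⁻¹ / Real.sqrt c₂ ≤ κ ∧ κ ≤ (cosAngle T S)⁻¹ / Real.sqrt c₁ := by
  set c : ℝ := cosAngle T S with hc_def
  have hc₂ : (0 : ℝ) < c₂ := lt_of_lt_of_le hc₁ hc₁₂
  have hsq₁ : (0 : ℝ) < Real.sqrt c₁ := Real.sqrt_pos.mpr hc₁
  have hsq₂ : (0 : ℝ) < Real.sqrt c₂ := Real.sqrt_pos.mpr hc₂
  -- samples of `g` equal samples of `P_S g`
  have hsamp : ∀ g : H, (∑' j, ‖⟪ψ j, g⟫_ℂ‖ ^ 2)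
      = ∑' j, ‖⟪ψ j, (orthogonalProjection S g : H)⟫_ℂ‖ ^ 2 := by
    intro g
    exact tsum_congr fun j => by rw [inner_eq_inner_proj S (hmem j) g]
  -- frame bounds for arbitrary `g`, in terms of its projection
  have hfr : ∀ g : H,
      c₁ * ‖(orthogonalProjection S g : H)‖ ^ 2 ≤ (∑' j, ‖⟪ψ j, g⟫_ℂ‖ ^ 2) ∧
      (∑' j, ‖⟪ψ j, g⟫_ℂ‖ ^ 2) ≤ c₂ * ‖(orthogonalProjection S g : H)‖ ^ 2 := by
    intro g
    have := hframe (orthogonalProjection S g : H) (SetLike.coe_mem _)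
    rw [hsamp g]
    exact this
  -- uniqueness: an element of `T` with all zero samples is zero
  have huniq : ∀ d ∈ T, (∀ j, ⟪ψ j, d⟫_ℂ = 0) → d = 0 := by
    intro d hdT hd0
    have hzero : (∑' j, ‖⟪ψ j, d⟫_ℂ‖ ^ 2) = 0 := by
      simp [hd0]
    have h1 : c₁ * ‖(orthogonalProjection S d : H)‖ ^ 2 ≤ 0 := by
      rw [← hzero]; exact (hfr d).1
    have hsq : ‖(orthogonalProjection S d : H)‖ ^ 2 ≤ 0 := by
      by_contra hpos
      push_neg at hpos
      nlinarith [mul_pos hc₁ hpos]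
    have h2 : ‖(orthogonalProjection S d : H)‖ = 0 := by
      have h2' : ‖(orthogonalProjection S d : H)‖ ^ 2 = 0 :=
        le_antisymm hsq (sq_nonneg _)
      exact sq_eq_zero_iff.mp h2'
    have h3 : c * ‖d‖ ≤ 0 := by
      have := cosAngle_mul_norm_le T S hdT
      rw [h2] at this; exact this
    have h4 : ‖d‖ ≤ 0 := by
      nlinarith [norm_nonneg d]
    exact norm_le_zero_iff.mp h4
  -- for unit vectors of T, F fixes them
  have hFfix : ∀ u ∈ T, F u = u := by
    intro u huT
    have huH : u ∈ T ⊔ Sᗮ := Submodule.mem_sup_left huT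
    obtain ⟨hFuT, hFus⟩ := hF u huH
    have hd : F u - u ∈ T := T.sub_mem hFuT huT
    have : F u - u = 0 := by
      refine huniq _ hd fun j => ?_
      rw [inner_sub_right, hFus j, sub_self]
    exact sub_eq_zero.mp this
  constructor
  · -- lower bound
    -- nonemptiness of the angle set
    have hne : {r : ℝ | ∃ u ∈ T, ‖u‖ = 1 ∧
        r = ‖(orthogonalProjection S u : H)‖}.Nonempty := by
      by_contra h
      rw [Set.not_nonempty_iff_eq_empty] at h
      have : c = 0 := by rw [hc_def, cosAngle, h, Real.sInf_empty]
      linarith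
    -- key step: for any δ > c there is a member of the κ-set exceeding (√c₂ δ)⁻¹
    have hkey : ∀ δ : ℝ, c < δ → (Real.sqrt c₂ * δ)⁻¹ ≤ κ := by
      intro δ hδ
      have hδ' : sInf {r : ℝ | ∃ u ∈ T, ‖u‖ = 1 ∧
          r = ‖(orthogonalProjection S u : H)‖} < δ := hδ
      obtain ⟨r, hrA, hrδ⟩ := exists_lt_of_csInf_lt hne hδ'
      obtain ⟨u, huT, hun, rfl⟩ := hrA
      have hPu_pos : 0 < ‖(orthogonalProjection S u : H)‖ := by
        have := cosAngle_mul_norm_le T S huT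
        rw [hun, mul_one] at this
        linarith
      set Su : ℝ := ∑' j, ‖⟪ψ j, u⟫_ℂ‖ ^ 2 with hSu_def
      have hSu_pos : 0 < Su := by
        have h := (hfr u).1
        rw [← hSu_def] at h
        linarith [mul_pos hc₁ (pow_pos hPu_pos 2)]
      have hSu_ne : Su ≠ 0 := ne_of_gt hSu_pos
      have hmem' : ‖F u‖ / Real.sqrt Su ∈ {r : ℝ | ∃ f ∈ T ⊔ Sᗮ,
          (∑' j, ‖⟪ψ j, f⟫_ℂ‖ ^ 2) ≠ 0 ∧
          r = ‖F f‖ / Real.sqrt (∑' j, ‖⟪ψ j, f⟫_ℂ‖ ^ 2)} :=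
        ⟨u, Submodule.mem_sup_left huT, hSu_ne, rfl⟩
      have hκ_ge : ‖F u‖ / Real.sqrt Su ≤ κ := hκ.1 hmem'
      rw [hFfix u huT, hun] at hκ_ge
      -- 1/√Su ≥ (√c₂ ‖Pu‖)⁻¹ > (√c₂ δ)⁻¹
      have hSu_le : Su ≤ c₂ * ‖(orthogonalProjection S u : H)‖ ^ 2 := (hfr u).2
      have hsqrt_le : Real.sqrt Su ≤ Real.sqrt c₂ * ‖(orthogonalProjection S u : H)‖ := by
        have h1 : Real.sqrt Su ≤ Real.sqrt (c₂ * ‖(orthogonalProjection S u : H)‖ ^ 2) :=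
          Real.sqrt_le_sqrt hSu_le
        rw [Real.sqrt_mul hc₂.le, Real.sqrt_sq (norm_nonneg _)] at h1
        exact h1
      have hsqrt_lt : Real.sqrt Su < Real.sqrt c₂ * δ := by
        have := mul_lt_mul_of_pos_left hrδ hsq₂
        linarith
      have hsqrtSu_pos : 0 < Real.sqrt Su := Real.sqrt_pos.mpr hSu_pos
      have : (Real.sqrt c₂ * δ)⁻¹ < (Real.sqrt Su)⁻¹ :=
        inv_strictAnti₀ hsqrtSu_pos hsqrt_lt
      have h1 : (Real.sqrt c₂ * δ)⁻¹ ≤ 1 / Real.sqrt Su := by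
        rw [one_div]; exact this.le
      linarith
    -- conclude by a limiting argument
    have hgoal : c⁻¹ / Real.sqrt c₂ = (Real.sqrt c₂ * c)⁻¹ := by
      rw [mul_inv, div_eq_mul_inv, mul_comm]
    rw [hgoal]
    refine le_of_forall_lt fun y hy => ?_
    rcases le_or_gt y 0 with hy0 | hy0
    · -- use δ = c + 1
      have h2 : (Real.sqrt c₂ * (c + 1))⁻¹ ≤ κ := hkey (c + 1) (by linarith)
      have hpos : 0 < (Real.sqrt c₂ * (c + 1))⁻¹ := by positivity
      linarith
    · -- choose δ strictly between c and y⁻¹/√c₂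
      have hyc : Real.sqrt c₂ * c < y⁻¹ := by
        have h1 := inv_strictAnti₀ hy0 hy
      -- h1 : ((√c₂ * c)⁻¹)⁻¹ < y⁻¹
        rwa [inv_inv] at h1
      have hcδ : c < y⁻¹ / Real.sqrt c₂ := (lt_div_iff₀' hsq₂).mpr hyc
      obtain ⟨δ, hδ1, hδ2⟩ := exists_between hcδ
      have hδpos : 0 < δ := lt_trans hangle hδ1
      have h2 : (Real.sqrt c₂ * δ)⁻¹ ≤ κ := hkey δ hδ1
      have hlt : Real.sqrt c₂ * δ < y⁻¹ := by
        have := mul_lt_mul_of_pos_left hδ2 hsq₂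
        calc Real.sqrt c₂ * δ < Real.sqrt c₂ * (y⁻¹ / Real.sqrt c₂) := this
          _ = y⁻¹ := by field_simp [mul_comm]
      have h3 : y < (Real.sqrt c₂ * δ)⁻¹ := by
        have h4 := inv_strictAnti₀ (mul_pos hsq₂ hδpos) hlt
        rwa [inv_inv] at h4
      linarith
  · -- upper bound
    refine hκ.2 ?_
    rintro r ⟨f, hf, hSfne, rfl⟩
    obtain ⟨hgT, hgs⟩ := hF f hf
    set g : H := F f with hg_def
    set Sf : ℝ := ∑' j, ‖⟪ψ j, f⟫_ℂ‖ ^ 2 with hSf_def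
    have hSfeq : Sf = ∑' j, ‖⟪ψ j, g⟫_ℂ‖ ^ 2 :=
      (tsum_congr fun j => by rw [hgs j]).symm
    have hg0 : g ≠ 0 := by
      intro h
      apply hSfne
      rw [hSfeq, h]
      simp
    have hSf_ge : c₁ * ‖(orthogonalProjection S g : H)‖ ^ 2 ≤ Sf := by
      rw [hSfeq]; exact (hfr g).1
    have hPg : c * ‖g‖ ≤ ‖(orthogonalProjection S g : H)‖ :=
      cosAngle_mul_norm_le T S hgT
    have hgpos : 0 < ‖g‖ := norm_pos_iff.mpr hg0
    have hSf_ge' : c₁ * (c * ‖g‖) ^ 2 ≤ Sf := by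
      have hp : (c * ‖g‖) ^ 2 ≤ ‖(orthogonalProjection S g : H)‖ ^ 2 :=
        pow_le_pow_left₀ (mul_nonneg hangle.le (norm_nonneg g)) hPg 2
      have := mul_le_mul_of_nonneg_left hp hc₁.le
      linarith
    have hSf_pos : 0 < Sf := by
      have := mul_pos hc₁ (pow_pos (mul_pos hangle hgpos) 2)
      linarith
    have hsqrt_ge : Real.sqrt c₁ * (c * ‖g‖) ≤ Real.sqrt Sf := by
      have h1 : Real.sqrt (c₁ * (c * ‖g‖) ^ 2) ≤ Real.sqrt Sf :=
        Real.sqrt_le_sqrt hSf_ge'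
      rw [Real.sqrt_mul hc₁.le, Real.sqrt_sq (by positivity)] at h1
      exact h1
    have hsqrtSu_pos : 0 < Real.sqrt Sf := Real.sqrt_pos.mpr hSf_pos
    rw [div_le_div_iff₀ hsqrtSu_pos hsq₁]
    -- goal : ‖g‖ * √c₁ ≤ c⁻¹ * √Sf
    have hcinv : c * c⁻¹ = 1 := mul_inv_cancel₀ (ne_of_gt hangle)
    nlinarith [mul_le_mul_of_nonneg_left hsqrt_ge (inv_nonneg.mpr hangle.le),
      mul_pos hangle hgpos]
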